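/- (Order representation in Minkowski spacetime.) Let p, q ∈ ℝ^{n+1} and suppose q − p does NOT lie in the closed future cone {y : y₀ ≥ |ȳ|}. Then there exists a linear (hence smooth) strictly √Q-steep function t : ℝ^{n+1} → ℝ (dt_x(y) > √Q(y) for every x and every y in the future causal cone C) with t(q) < t(p). -/

import Mathlib

open scoped RealInnerProductSpace

/-- Any `u` with `u.1 > 1 + ‖u.2‖` is strictly √Q-steep. -/
lemma steep_of_big {n : ℕ} (u : ℝ × EuclideanSpace ℝ (Fin n))
    (hu : 1 + ‖u.2‖ < u.1) :
    ∀ y : ℝ × EuclideanSpace ℝ (Fin n), y ≠ 0 → ‖y.2‖ ≤ y.1 →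
      Real.sqrt (y.1 ^ 2 - ‖y.2‖ ^ 2) < u.1 * y.1 - ⟪u.2, y.2⟫ := by
  intro y hy hcaus
  have hy1 : 0 < y.1 := by
    rcases lt_or_eq_of_le (le_trans (norm_nonneg _) hcaus) with h | h
    · exact h
    · exfalso
      apply hy
      have h2 : ‖y.2‖ = 0 := le_antisymm (h ▸ hcaus) (norm_nonneg _)
      have : y.2 = 0 := norm_eq_zero.mp h2
      exact Prod.ext h.symm this
  have h1 : Real.sqrt (y.1 ^ 2 - ‖y.2‖ ^ 2) ≤ y.1 := by
    calc Real.sqrt (y.1 ^ 2 - ‖y.2‖ ^ 2) ≤ Real.sqrt (y.1 ^ 2) := by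
          apply Real.sqrt_le_sqrt
          nlinarith [norm_nonneg y.2]
      _ = y.1 := by rw [Real.sqrt_sq hy1.le]
  have h2 : ⟪u.2, y.2⟫ ≤ ‖u.2‖ * ‖y.2‖ := real_inner_le_norm _ _
  have h3 : ‖u.2‖ * ‖y.2‖ ≤ ‖u.2‖ * y.1 := by
    exact mul_le_mul_of_nonneg_left hcaus (norm_nonneg _)
  nlinarith

/-- order representation in Minkowski spacetime: if `q − p` does NOT lie
in the closed future cone `{y : y₀ ≥ |ȳ|}`, then there is a linear (hence smooth)
strictly `√Q`-steep function `t(x) = ⟨u, x⟩_L` (i.e. `⟨u, y⟩_L > √Q(y)` for every `y` in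
the future causal cone `C = {y ≠ 0 : y₀ ≥ |ȳ|}`) with `t q < t p`. -/
theorem stmt_16 {n : ℕ} (hn : 1 ≤ n)
    (p q : ℝ × EuclideanSpace ℝ (Fin n))
    (hpq : ¬ ‖(q - p).2‖ ≤ (q - p).1) :
    ∃ u : ℝ × EuclideanSpace ℝ (Fin n),
      (∀ y : ℝ × EuclideanSpace ℝ (Fin n), y ≠ 0 → ‖y.2‖ ≤ y.1 →
        Real.sqrt (y.1 ^ 2 - ‖y.2‖ ^ 2) < u.1 * y.1 - ⟪u.2, y.2⟫) ∧
      u.1 * q.1 - ⟪u.2, q.2⟫ < u.1 * p.1 - ⟪u.2, p.2⟫ := by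
  set d := q - p with hd
  have hd1 : d.1 = q.1 - p.1 := rfl
  have hd2 : d.2 = q.2 - p.2 := rfl
  have hlt : d.1 < ‖d.2‖ := lt_of_not_ge hpq
  -- key: it suffices to find u steep with u.1*d.1 - ⟪u.2,d.2⟫ < 0
  have key : ∀ u : ℝ × EuclideanSpace ℝ (Fin n),
      u.1 * d.1 - ⟪u.2, d.2⟫ < 0 →
      u.1 * q.1 - ⟪u.2, q.2⟫ < u.1 * p.1 - ⟪u.2, p.2⟫ := by
    intro u h
    rw [hd1, hd2, inner_sub_right] at h
    linarith
  by_cases hs : d.2 = 0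
  · -- then d.1 < 0; take u = (2, 0)
    refine ⟨(2, 0), steep_of_big _ (by simp), key _ ?_⟩
    have : ‖d.2‖ = 0 := by rw [hs, norm_zero]
    simp only [inner_zero_left]
    rw [this] at hlt
    norm_num
    linarith
  · set s := ‖d.2‖ with hsd
    have hs0 : 0 < s := norm_pos_iff.mpr hs
    have hδ : 0 < s - d.1 := by linarith
    set t := (2 * |d.1| + 1) / (s * (s - d.1)) with ht
    have ht0 : 0 < t := div_pos (by positivity) (by positivity)
    refine ⟨(2 + t * s, t • d.2), steep_of_big _ ?_, key _ ?_⟩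
    · simp only [norm_smul, Real.norm_eq_abs, abs_of_pos ht0]
      linarith
    · simp only [real_inner_smul_left, real_inner_self_eq_norm_sq, ← hsd]
      have htsδ : t * (s * (s - d.1)) = 2 * |d.1| + 1 := by
        rw [ht]; exact div_mul_cancel₀ _ (mul_pos hs0 hδ).ne'
      have habs : d.1 ≤ |d.1| := le_abs_self _
      nlinarith
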